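/- arXiv:2102.08687 — 2 statements merged into one kernel-verified Lean document; each statement's English description precedes it below -/
import Mathlib

section
/- Let A be a real symmetric n×n matrix and v ∈ ℝⁿ. Suppose for some N' > 0 there exists a nonzero vector w in the minimal eigenspace of A_{N'} := A - (2/N') v vᵀ with w orthogonal to v. Then for every N with N' ≤ N (including N = ∞, i.e., the matrix A itself), λ_min(A - (2/N) v vᵀ) = λ_min(A_{N'}). -/
open Matrix

/-- The smallest eigenvalue of a symmetric matrix, defined via the Rayleigh quotient
as the infimum of `vᵀ M v` over unit vectors `v`. -/
noncomputable def lamMin {ι : Type} [Fintype ι] (M : Matrix ι ι ℝ) : ℝ :=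
  ⨅ v : {v : ι → ℝ // ∑ i, (v i) ^ 2 = 1}, (v : ι → ℝ) ⬝ᵥ (M *ᵥ (v : ι → ℝ))

lemma vecMulVec_mulVec' {n : ℕ} (v w x : Fin n → ℝ) :
    vecMulVec v w *ᵥ x = (w ⬝ᵥ x) • v := by
  ext i
  simp only [vecMulVec, mulVec, dotProduct, Pi.smul_apply, smul_eq_mul, Matrix.of_apply]
  rw [Finset.sum_mul]
  exact Finset.sum_congr rfl fun j _ => by ring

lemma lamMin_bddBelow {ι : Type} [Fintype ι] (M : Matrix ι ι ℝ) :
    BddBelow (Set.range fun x : {v : ι → ℝ // ∑ i, (v i) ^ 2 = 1} =>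
      (x : ι → ℝ) ⬝ᵥ (M *ᵥ (x : ι → ℝ))) := by
  refine ⟨-∑ i, ∑ j, |M i j|, ?_⟩
  rintro y ⟨⟨x, hx⟩, rfl⟩
  have hx1 : ∀ i, |x i| ≤ 1 := by
    intro i
    have h1 : (x i) ^ 2 ≤ 1 :=
      hx ▸ Finset.single_le_sum (fun j _ => sq_nonneg (x j)) (Finset.mem_univ i)
    nlinarith [abs_nonneg (x i), sq_abs (x i)]
  simp only [dotProduct, mulVec, dotProduct]
  rw [neg_le]
  calc -∑ i, x i * ∑ j, M i j * x j = ∑ i, ∑ j, -(x i * (M i j * x j)) := by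
        rw [← Finset.sum_neg_distrib]
        exact Finset.sum_congr rfl fun i _ => by rw [Finset.mul_sum, Finset.sum_neg_distrib]
    _ ≤ ∑ i, ∑ j, |M i j| := by
        refine Finset.sum_le_sum fun i _ => Finset.sum_le_sum fun j _ => ?_
        have h1 : |x i * (M i j * x j)| ≤ |M i j| := by
          rw [abs_mul, abs_mul]
          have h2 := mul_le_mul (hx1 i)
            (mul_le_mul_of_nonneg_left (hx1 j) (abs_nonneg (M i j)))
            (by positivity) zero_le_one
          simpa using h2
        have h2 := neg_abs_le (x i * (M i j * x j))
        linarith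

lemma lamMin_key {n : ℕ} (A : Matrix (Fin n) (Fin n) ℝ) (v : Fin n → ℝ)
    {c c' : ℝ} (hcc : c ≤ c')
    (hw : ∃ w : Fin n → ℝ, w ≠ 0 ∧
      (A - c' • vecMulVec v v) *ᵥ w = lamMin (A - c' • vecMulVec v v) • w ∧
      w ⬝ᵥ v = 0) :
    lamMin (A - c • vecMulVec v v) = lamMin (A - c' • vecMulVec v v) := by
  obtain ⟨w, hw0, heig, horth⟩ := hw
  have hvw : v ⬝ᵥ w = 0 := by rwa [dotProduct_comm]
  -- Rayleigh identity
  have hray : ∀ x : Fin n → ℝ,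
      x ⬝ᵥ ((A - c • vecMulVec v v) *ᵥ x)
        = x ⬝ᵥ ((A - c' • vecMulVec v v) *ᵥ x) + (c' - c) * (v ⬝ᵥ x) ^ 2 := by
    intro x
    simp only [sub_mulVec, smul_mulVec, dotProduct_sub, dotProduct_smul,
      vecMulVec_mulVec', dotProduct_smul, smul_eq_mul]
    rw [dotProduct_comm x v]
    ring
  -- normalized eigenvector
  set lam := lamMin (A - c' • vecMulVec v v) with hlam
  have hs : 0 < ∑ i, (w i) ^ 2 := by
    rcases Function.ne_iff.mp hw0 with ⟨i, hi⟩
    have : 0 < (w i) ^ 2 := lt_of_le_of_ne (sq_nonneg _) (Ne.symm (pow_ne_zero 2 hi))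
    exact this.trans_le (Finset.single_le_sum (fun j _ => sq_nonneg (w j)) (Finset.mem_univ i))
  set s := ∑ i, (w i) ^ 2 with hsdef
  set w' : Fin n → ℝ := (Real.sqrt s)⁻¹ • w with hw'
  have hsqrt : 0 < Real.sqrt s := Real.sqrt_pos.mpr hs
  have hunit : ∑ i, (w' i) ^ 2 = 1 := by
    simp only [hw', Pi.smul_apply, smul_eq_mul, mul_pow, ← Finset.mul_sum]
    rw [← hsdef, inv_pow, Real.sq_sqrt hs.le, inv_mul_cancel₀ hs.ne']
  have hMw : (A - c • vecMulVec v v) *ᵥ w = lam • w := by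
    have h0 : vecMulVec v v *ᵥ w = 0 := by
      rw [vecMulVec_mulVec', hvw, zero_smul]
    have h0' : (A - c • vecMulVec v v) *ᵥ w = A *ᵥ w := by
      rw [sub_mulVec, smul_mulVec, h0, smul_zero, sub_zero]
    have h0'' : (A - c' • vecMulVec v v) *ᵥ w = A *ᵥ w := by
      rw [sub_mulVec, smul_mulVec, h0, smul_zero, sub_zero]
    rw [h0', ← h0'', heig]
  have hval : w' ⬝ᵥ ((A - c • vecMulVec v v) *ᵥ w') = lam := by
    have : (A - c • vecMulVec v v) *ᵥ w' = lam • w' := by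
      rw [hw', mulVec_smul, hMw, smul_comm]
    rw [this, dotProduct_smul, smul_eq_mul, hw']
    simp only [smul_dotProduct, dotProduct_smul, smul_eq_mul]
    have hww : w ⬝ᵥ w = s := by
      simp only [dotProduct, hsdef, sq]
    rw [hww]
    calc lam * ((Real.sqrt s)⁻¹ * ((Real.sqrt s)⁻¹ * s))
        = lam * ((Real.sqrt s * Real.sqrt s)⁻¹ * s) := by ring
      _ = lam := by rw [Real.mul_self_sqrt hs.le, inv_mul_cancel₀ hs.ne', mul_one]
  have hne : Nonempty {x : Fin n → ℝ // ∑ i, (x i) ^ 2 = 1} := ⟨⟨w', hunit⟩⟩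
  apply le_antisymm
  · calc lamMin (A - c • vecMulVec v v)
        ≤ w' ⬝ᵥ ((A - c • vecMulVec v v) *ᵥ w') :=
          ciInf_le (lamMin_bddBelow _) (⟨w', hunit⟩ : {x : Fin n → ℝ // ∑ i, (x i) ^ 2 = 1})
      _ = lam := hval
  · refine le_ciInf fun x => ?_
    have h1 : lam ≤ (x : Fin n → ℝ) ⬝ᵥ ((A - c' • vecMulVec v v) *ᵥ (x : Fin n → ℝ)) :=
      ciInf_le (lamMin_bddBelow _) x
    have h2 := hray (x : Fin n → ℝ)
    nlinarith [sq_nonneg (v ⬝ᵥ (x : Fin n → ℝ))]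

/-- if the minimal eigenvalue of `A_{N'} = A - (2/N') v vᵀ` has an eigenvector
orthogonal to `v`, then `λ_min(A - (2/N) v vᵀ) = λ_min(A_{N'})` for all `N ≥ N'`, and also
`λ_min(A) = λ_min(A_{N'})` (the case `N = ∞`). -/
theorem lamMin_constant_of_orthogonal_eigenvector {n : ℕ}
    (A : Matrix (Fin n) (Fin n) ℝ) (hA : A.IsSymm) (v : Fin n → ℝ)
    {N' : ℝ} (hN' : 0 < N')
    (hw : ∃ w : Fin n → ℝ, w ≠ 0 ∧
      (A - (2 / N') • vecMulVec v v) *ᵥ w = lamMin (A - (2 / N') • vecMulVec v v) • w ∧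
      w ⬝ᵥ v = 0) :
    (∀ N : ℝ, N' ≤ N →
      lamMin (A - (2 / N) • vecMulVec v v) = lamMin (A - (2 / N') • vecMulVec v v)) ∧
    lamMin A = lamMin (A - (2 / N') • vecMulVec v v) := by
  constructor
  · intro N hN
    refine lamMin_key A v ?_ hw
    rw [div_le_div_iff₀ (hN'.trans_le hN) hN']
    nlinarith
  · have h := lamMin_key A v (c := 0) (le_of_lt (div_pos two_pos hN')) hw
    rwa [zero_smul, sub_zero] at h
end

section
/- Let A be a real symmetric n×n matrix, v ∈ ℝⁿ nonzero, and suppose there exist c ∈ ℝ and 0 < N' < N'' such that λ_min(A - (2/N) v vᵀ) = c - (2/N)(vᵀ v) for all N ∈ [N', N'']. Then v lies in the minimal eigenspace of A - (2/N'') v vᵀ. -/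
open Matrix

lemma quad_nonneg_zero {a b : ℝ} (ha : 0 ≤ a) (h : ∀ ε : ℝ, 0 ≤ a * ε^2 + b * ε) : b = 0 := by
  have hpos : (0:ℝ) < a + 1 := by linarith
  set t : ℝ := 1/(a+1) with htdef
  have ht : (0:ℝ) < t := by positivity
  have hat : a * t < 1 := by
    rw [htdef, mul_one_div]; exact (div_lt_one hpos).mpr (by linarith)
  have h2 := h (-b * t)
  have he : a * (-b*t)^2 + b * (-b*t) = b^2 * (t * (a*t - 1)) := by ring
  rw [he] at h2
  have hneg : t * (a*t - 1) < 0 := mul_neg_of_pos_of_neg ht (by linarith)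
  by_contra hb
  have hb2 : 0 < b^2 := by positivity
  nlinarith

lemma self_dot {n : ℕ} (x : Fin n → ℝ) : x ⬝ᵥ x = ∑ i, (x i)^2 := by
  simp [dotProduct, pow_two]

lemma dot_self_eq_zero' {n : ℕ} {x : Fin n → ℝ} (h : x ⬝ᵥ x = 0) : x = 0 := by
  rw [self_dot] at h
  funext i
  have := (Finset.sum_eq_zero_iff_of_nonneg (fun j _ => sq_nonneg (x j))).mp h i (Finset.mem_univ i)
  exact sq_eq_zero_iff.mp this

lemma symm_dot {n : ℕ} {M : Matrix (Fin n) (Fin n) ℝ} (hM : M.IsSymm) (x y : Fin n → ℝ) :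
    x ⬝ᵥ (M *ᵥ y) = y ⬝ᵥ (M *ᵥ x) := by
  rw [dotProduct_mulVec, ← mulVec_transpose, hM.eq, dotProduct_comm]

lemma rayleigh_quad {n : ℕ} (A : Matrix (Fin n) (Fin n) ℝ) (t : ℝ) (v x : Fin n → ℝ) :
    x ⬝ᵥ ((A - t • vecMulVec v v) *ᵥ x) = x ⬝ᵥ (A *ᵥ x) - t * (v ⬝ᵥ x)^2 := by
  have h : x ⬝ᵥ (vecMulVec v v *ᵥ x) = (v ⬝ᵥ x)^2 := by
    simp [vecMulVec, mulVec, dotProduct, pow_two, Finset.sum_mul, Finset.mul_sum]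
    exact Finset.sum_congr rfl fun i _ => Finset.sum_congr rfl fun j _ => by ring
  simp [sub_mulVec, dotProduct_sub, smul_mulVec, dotProduct_smul, h]

lemma lamMin_exists_min {n : ℕ} (hn : 0 < n) (M : Matrix (Fin n) (Fin n) ℝ) :
    ∃ u : Fin n → ℝ, (∑ i, (u i)^2 = 1) ∧ u ⬝ᵥ (M *ᵥ u) = lamMin M ∧
      ∀ w : Fin n → ℝ, (∑ i, (w i)^2 = 1) → lamMin M ≤ w ⬝ᵥ (M *ᵥ w) := by
  have hcont : Continuous fun u : Fin n → ℝ => u ⬝ᵥ (M *ᵥ u) := by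
    simp only [dotProduct, mulVec]; fun_prop
  have hcpt : IsCompact {u : Fin n → ℝ | ∑ i, (u i)^2 = 1} := by
    apply Metric.isCompact_of_isClosed_isBounded
    · exact isClosed_eq (by fun_prop) continuous_const
    · apply Bornology.IsBounded.subset (Metric.isBounded_closedBall (x := (0 : Fin n → ℝ)) (r := 1))
      intro u hu
      simp only [Metric.mem_closedBall, dist_zero_right]
      rw [pi_norm_le_iff_of_nonneg zero_le_one]
      intro i
      rw [Real.norm_eq_abs, ← sq_le_one_iff_abs_le_one]
      calc (u i)^2 ≤ ∑ j, (u j)^2 :=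
            Finset.single_le_sum (f := fun j => (u j)^2) (fun j _ => sq_nonneg _) (Finset.mem_univ i)
      _ = 1 := hu
  have hne : ({u : Fin n → ℝ | ∑ i, (u i)^2 = 1}).Nonempty := by
    refine ⟨Pi.single ⟨0, hn⟩ 1, ?_⟩
    simp [Pi.single_apply]
  obtain ⟨u, huS, hmin⟩ := hcpt.exists_isMinOn hne hcont.continuousOn
  haveI : Nonempty {w : Fin n → ℝ // ∑ i, (w i)^2 = 1} := ⟨⟨u, huS⟩⟩
  have hbdd : BddBelow (Set.range fun w : {w : Fin n → ℝ // ∑ i, (w i)^2 = 1} =>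
      (w : Fin n → ℝ) ⬝ᵥ (M *ᵥ (w : Fin n → ℝ))) := by
    refine ⟨u ⬝ᵥ (M *ᵥ u), ?_⟩
    rintro _ ⟨⟨w, hw⟩, rfl⟩
    exact hmin hw
  have hle : lamMin M ≤ u ⬝ᵥ (M *ᵥ u) := ciInf_le hbdd ⟨u, huS⟩
  have hge : u ⬝ᵥ (M *ᵥ u) ≤ lamMin M :=
    le_ciInf fun ⟨w, hw⟩ => hmin hw
  have heq : u ⬝ᵥ (M *ᵥ u) = lamMin M := le_antisymm hge hle
  exact ⟨u, huS, heq, fun w hw => heq ▸ hmin hw⟩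

lemma lamMin_rayleigh_le {n : ℕ} (hn : 0 < n) (M : Matrix (Fin n) (Fin n) ℝ) (x : Fin n → ℝ) :
    lamMin M * (x ⬝ᵥ x) ≤ x ⬝ᵥ (M *ᵥ x) := by
  obtain ⟨u, -, -, hlow⟩ := lamMin_exists_min hn M
  rcases eq_or_ne x 0 with rfl | hx
  · simp
  · have hxx : 0 < x ⬝ᵥ x := by
      rcases lt_or_eq_of_le (by rw [self_dot]; positivity : (0:ℝ) ≤ x ⬝ᵥ x) with h | h
      · exact h
      · exact absurd (dot_self_eq_zero' h.symm) hx
    set r : ℝ := Real.sqrt (x ⬝ᵥ x) with hr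
    have hrpos : 0 < r := Real.sqrt_pos.mpr hxx
    have hrne : r ≠ 0 := ne_of_gt hrpos
    have hr2 : r^2 = x ⬝ᵥ x := Real.sq_sqrt hxx.le
    have hunit : ∑ i, ((r⁻¹ • x) i)^2 = 1 := by
      simp only [Pi.smul_apply, smul_eq_mul, mul_pow, ← Finset.mul_sum]
      rw [← self_dot, ← hr2]
      field_simp
    have h2 : lamMin M ≤ r⁻¹ * (r⁻¹ * (x ⬝ᵥ (M *ᵥ x))) := by
      have := hlow (r⁻¹ • x) hunit
      rwa [smul_dotProduct, mulVec_smul, dotProduct_smul, smul_eq_mul, smul_eq_mul] at this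
    calc lamMin M * (x ⬝ᵥ x) = lamMin M * r^2 := by rw [hr2]
    _ ≤ (r⁻¹ * (r⁻¹ * (x ⬝ᵥ (M *ᵥ x)))) * r^2 := by
        apply mul_le_mul_of_nonneg_right h2 (sq_nonneg r)
    _ = x ⬝ᵥ (M *ᵥ x) * (r⁻¹ * r) * (r⁻¹ * r) := by ring
    _ = x ⬝ᵥ (M *ᵥ x) := by rw [inv_mul_cancel₀ hrne]; ring

lemma min_is_eigen {n : ℕ} (hn : 0 < n) {M : Matrix (Fin n) (Fin n) ℝ} (hM : M.IsSymm)
    {u : Fin n → ℝ} (hu : ∑ i, (u i)^2 = 1) (heq : u ⬝ᵥ (M *ᵥ u) = lamMin M) :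
    M *ᵥ u = lamMin M • u := by
  set lam := lamMin M with hlam
  set w : Fin n → ℝ := M *ᵥ u - lam • u with hw
  have huu : u ⬝ᵥ u = 1 := by rw [self_dot]; exact hu
  have key : ∀ x : Fin n → ℝ, x ⬝ᵥ w = 0 := by
    intro x
    have ha : 0 ≤ x ⬝ᵥ (M *ᵥ x) - lam * (x ⬝ᵥ x) := by
      have := lamMin_rayleigh_le hn M x; linarith
    have hb : 2 * (x ⬝ᵥ w) = 0 := by
      apply quad_nonneg_zero ha
      intro ε
      have hsym : u ⬝ᵥ (M *ᵥ x) = x ⬝ᵥ (M *ᵥ u) := symm_dot hM u x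
      have hcomm : u ⬝ᵥ x = x ⬝ᵥ u := dotProduct_comm u x
      have hxw : x ⬝ᵥ w = x ⬝ᵥ (M *ᵥ u) - lam * (x ⬝ᵥ u) := by
        rw [hw, dotProduct_sub, dotProduct_smul, smul_eq_mul]
      have hexp : (u + ε • x) ⬝ᵥ (M *ᵥ (u + ε • x)) - lam * ((u + ε • x) ⬝ᵥ (u + ε • x))
          = (x ⬝ᵥ (M *ᵥ x) - lam * (x ⬝ᵥ x)) * ε^2 + (2 * (x ⬝ᵥ w)) * ε := by
        simp only [mulVec_add, mulVec_smul, dotProduct_add, add_dotProduct, dotProduct_smul,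
          smul_dotProduct, smul_eq_mul, hxw]
        rw [hsym, hcomm, heq, huu]
        ring
      have hR := lamMin_rayleigh_le hn M (u + ε • x)
      have h0 : 0 ≤ (u + ε • x) ⬝ᵥ (M *ᵥ (u + ε • x)) - lam * ((u + ε • x) ⬝ᵥ (u + ε • x)) := by
        rw [hlam]; linarith
      rw [hexp] at h0
      exact h0
    linarith
  have hw0 : w = 0 := dot_self_eq_zero' (key w)
  rw [hw] at hw0
  exact sub_eq_zero.mp hw0

/-- if `λ_min(A - (2/N) v vᵀ) = c - (2/N) vᵀv` on an interval `[N', N'']`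
with `0 < N' < N''`, then `v` is a minimal eigenvector of `A - (2/N'') v vᵀ`. -/
theorem curvature_sharp_of_affine_shape {n : ℕ}
    (A : Matrix (Fin n) (Fin n) ℝ) (hA : A.IsSymm) (v : Fin n → ℝ) (hv : v ≠ 0)
    (c : ℝ) {N' N'' : ℝ} (hN' : 0 < N') (hNN : N' < N'')
    (hshape : ∀ N ∈ Set.Icc N' N'',
      lamMin (A - (2 / N) • vecMulVec v v) = c - (2 / N) * (v ⬝ᵥ v)) :
    (A - (2 / N'') • vecMulVec v v) *ᵥ v
      = lamMin (A - (2 / N'') • vecMulVec v v) • v := by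
  have hn : 0 < n := by
    rcases Nat.eq_zero_or_pos n with h | h
    · subst h; exact absurd (funext fun i => i.elim0) hv
    · exact h
  have hN'' : 0 < N'' := lt_trans hN' hNN
  set t1 : ℝ := 2 / N'' with ht1
  set t2 : ℝ := 2 / N' with ht2
  have ht12 : t1 < t2 := div_lt_div_of_pos_left two_pos hN' hNN
  set s : ℝ := v ⬝ᵥ v with hs
  set M1 := A - t1 • vecMulVec v v with hM1def
  set M2 := A - t2 • vecMulVec v v with hM2def
  have hL1 : lamMin M1 = c - t1 * s := hshape N'' ⟨hNN.le, le_refl _⟩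
  have hL2 : lamMin M2 = c - t2 * s := hshape N' ⟨le_refl _, hNN.le⟩
  obtain ⟨u, hu, hequ, -⟩ := lamMin_exists_min hn M2
  set α : ℝ := v ⬝ᵥ u with hα
  have huu : u ⬝ᵥ u = 1 := by rw [self_dot]; exact hu
  have hq1 : u ⬝ᵥ (M1 *ᵥ u) = u ⬝ᵥ (A *ᵥ u) - t1 * α^2 := rayleigh_quad A t1 v u
  have hq2 : u ⬝ᵥ (M2 *ᵥ u) = u ⬝ᵥ (A *ᵥ u) - t2 * α^2 := rayleigh_quad A t2 v u
  have hR : lamMin M1 ≤ u ⬝ᵥ (M1 *ᵥ u) := by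
    have := lamMin_rayleigh_le hn M1 u
    rw [huu, mul_one] at this
    exact this
  -- slope comparison gives s ≤ α²
  have key : (t2 - t1) * (s - α^2) ≤ 0 := by
    have hAu : u ⬝ᵥ (A *ᵥ u) = c - t2 * s + t2 * α^2 := by
      rw [hequ, hL2] at hq2; linarith
    rw [hq1, hL1, hAu] at hR
    nlinarith [hR]
  have hsa : s ≤ α^2 := by
    by_contra h
    push_neg at h
    nlinarith [mul_pos (sub_pos.mpr ht12) (sub_pos.mpr h)]
  -- w := v - α • u is zero
  set w : Fin n → ℝ := v - α • u with hwdef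
  have hww : w ⬝ᵥ w = s - α^2 := by
    rw [hwdef]
    simp only [sub_dotProduct, dotProduct_sub, smul_dotProduct, dotProduct_smul, smul_eq_mul,
      huu, dotProduct_comm u v, ← hα, ← hs]
    ring
  have hwge : 0 ≤ w ⬝ᵥ w := by rw [self_dot]; positivity
  have hww0 : w ⬝ᵥ w = 0 := le_antisymm (by rw [hww]; linarith) hwge
  have hα2 : α^2 = s := by rw [hww0] at hww; linarith
  have hveq : v = α • u := by
    have := dot_self_eq_zero' hww0
    rw [hwdef] at this
    exact sub_eq_zero.mp this
  -- u is a lamMin-minimizer for M1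
  have heig_prem : u ⬝ᵥ (M1 *ᵥ u) = lamMin M1 := by
    rw [hq1, hL1, hα2]
    rw [hequ, hL2, hα2] at hq2
    linarith
  have hM1symm : M1.IsSymm := by
    have hvv : (vecMulVec v v)ᵀ = vecMulVec v v := by
      ext i j; simp [vecMulVec, transpose_apply, mul_comm]
    rw [Matrix.IsSymm, hM1def, transpose_sub, transpose_smul, hvv, hA.eq]
  have heig := min_is_eigen hn hM1symm hu heig_prem
  rw [hveq, mulVec_smul, heig, smul_comm]
end
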